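/- Every tree on n+1 vertices can be obtained by extension at a special point of a tree on n vertices: for every finite tree T with at least 3 vertices, there exists a leaf u of T such that, denoting by v the unique neighbor of u and by T' the tree obtained from T by deleting u, the vertex v belongs to spr(T') ∪ pspr(T') ∪ dpr(T') ∪ pdpr(T'), i.e., v is a singly pre-pendant point of T', a doubly pre-pendant point of T', or a leaf of T' adjacent to a singly or doubly pre-pendant point of T'. -/
import Mathlib

open SimpleGraph Walk

lemma no_chord {V : Type*} [DecidableEq V] {T : SimpleGraph V} (hac : T.IsAcyclic) {a c b : V}
    (h : T.Adj a c) (q : T.Walk c b) (hpath : (Walk.cons h q).IsPath)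
    {w : V} (hw : w ∈ (Walk.cons h q).support) (haw : T.Adj a w) (hwc : w ≠ c) : False := by
  set p : T.Walk a b := Walk.cons h q with hp
  have hq : p.IsPath := hpath
  have hp' : (p.takeUntil w hw).IsPath := hq.takeUntil hw
  have hrev : (p.takeUntil w hw).reverse.IsPath := hp'.reverse
  have he : s(a, w) ∉ (p.takeUntil w hw).reverse.edges := by
    rw [Walk.edges_reverse, List.mem_reverse]
    intro hmem
    have hmem' : s(a, w) ∈ p.edges := Walk.edges_takeUntil_subset p hw hmem
    rw [hp] at hmem'
    simp only [Walk.edges_cons, List.mem_cons] at hmem'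
    rcases hmem' with h1 | h2
    · rw [Sym2.eq_iff] at h1
      rcases h1 with ⟨-, h1⟩ | ⟨h1, -⟩
      · exact hwc h1
      · exact h.ne h1
    · have : a ∈ q.support := Walk.fst_mem_support_of_mem_edges q h2
      exact ((Walk.cons_isPath_iff h q).mp hpath).2 this
  exact hac _ (SimpleGraph.Path.cons_isCycle ⟨(p.takeUntil w hw).reverse, hrev⟩ haw he)


lemma lift2 {V : Type*} {T : SimpleGraph V} {u v : V} (hvu : v ≠ u) :
    ∀ {x y : V} (W : T.Walk x y), (∀ z ∈ W.support, z ≠ u ∧ z ≠ v) →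
    ∀ (hx1 : x ≠ u) (hx2 : (⟨x, hx1⟩ : {w : V | w ≠ u}) ≠ ⟨v, hvu⟩)
      (hy1 : y ≠ u) (hy2 : (⟨y, hy1⟩ : {w : V | w ≠ u}) ≠ ⟨v, hvu⟩),
    ((T.induce {w : V | w ≠ u}).induce
        {z : {w : V | w ≠ u} | z ≠ (⟨v, hvu⟩ : {w : V | w ≠ u})}).Reachable
      ⟨⟨x, hx1⟩, hx2⟩ ⟨⟨y, hy1⟩, hy2⟩ := by
  intro x y W
  induction W with
  | nil => intro _ hx1 hx2 hy1 hy2; exact Reachable.refl _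
  | @cons x z y hadj W ih =>
    intro h hx1 hx2 hy1 hy2
    have hz : z ≠ u ∧ z ≠ v := h z (by simp)
    have hz2 : (⟨z, hz.1⟩ : {w : V | w ≠ u}) ≠ ⟨v, hvu⟩ := by
      intro hh; exact hz.2 (congrArg Subtype.val hh)
    refine Reachable.trans ?_ (ih (fun a ha => h a (by simp [ha])) hz.1 hz2 hy1 hy2)
    exact SimpleGraph.Adj.reachable (by exact hadj)



/-- A vertex `v` of a graph `T` is singly pre-pendant (`v ∈ spr(T)`) if at most one
connected component of `T - v` (deleting `v` and all incident edges) has more than one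
vertex. -/
def SinglyPrePendant {V : Type*} (T : SimpleGraph V) (v : V) : Prop :=
  {c : (T.induce {w : V | w ≠ v}).ConnectedComponent | 1 < c.supp.ncard}.Subsingleton

/-- A vertex `v` of a graph `T` is doubly pre-pendant (`v ∈ dpr(T)`) if at most one
connected component of `T - v` has more than two vertices. -/
def DoublyPrePendant {V : Type*} (T : SimpleGraph V) (v : V) : Prop :=
  {c : (T.induce {w : V | w ≠ v}).ConnectedComponent | 2 < c.supp.ncard}.Subsingleton

/-- `v ∈ pspr(T)`: `v` is a leaf of `T` adjacent to a singly pre-pendant vertex. -/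
def PendantAdjSinglyPrePendant {V : Type*} (T : SimpleGraph V) (v : V) : Prop :=
  (T.neighborSet v).ncard = 1 ∧ ∃ w : V, T.Adj v w ∧ SinglyPrePendant T w

/-- `v ∈ pdpr(T)`: `v` is a leaf of `T` adjacent to a doubly pre-pendant vertex. -/
def PendantAdjDoublyPrePendant {V : Type*} (T : SimpleGraph V) (v : V) : Prop :=
  (T.neighborSet v).ncard = 1 ∧ ∃ w : V, T.Adj v w ∧ DoublyPrePendant T w

/-- every finite tree `T` with at least 3 vertices can be obtained by
extension at a special point of a smaller tree: there is a leaf `u` of `T` with unique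
neighbor `v` such that, in the tree `T'` obtained from `T` by deleting `u`, the vertex
`v` belongs to `spr(T') ∪ pspr(T') ∪ dpr(T') ∪ pdpr(T')`. -/
theorem tree_is_extension_at_special_point {V : Type*} [Fintype V] (T : SimpleGraph V)
    (hT : T.IsTree) (hcard : 3 ≤ Fintype.card V) :
    ∃ (u v : V) (h : T.Adj u v), (T.neighborSet u).ncard = 1 ∧
      (SinglyPrePendant (T.induce {w : V | w ≠ u}) ⟨v, h.ne'⟩ ∨
       PendantAdjSinglyPrePendant (T.induce {w : V | w ≠ u}) ⟨v, h.ne'⟩ ∨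
       DoublyPrePendant (T.induce {w : V | w ≠ u}) ⟨v, h.ne'⟩ ∨
       PendantAdjDoublyPrePendant (T.induce {w : V | w ≠ u}) ⟨v, h.ne'⟩) := by
  classical
  classical
  have hac := hT.IsAcyclic
  -- a vertex of degree ≥ 2
  have hdeg : ∃ c : V, 2 ≤ T.degree c := by
    by_contra hno
    push_neg at hno
    have hsum := T.sum_degrees_eq_twice_card_edges
    have hedges : T.edgeFinset.card + 1 = Fintype.card V := hT.card_edgeFinset
    have hle : ∑ v : V, T.degree v ≤ Fintype.card V := by
      calc ∑ v : V, T.degree v ≤ ∑ _v : V, 1 := Finset.sum_le_sum (fun i _ => by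
              have := hno i; omega)
        _ = Fintype.card V := by simp
    rw [hsum] at hle
    omega
  obtain ⟨c, hc⟩ := hdeg
  rw [← T.card_neighborFinset_eq_degree] at hc
  obtain ⟨a, ha, b, hb, hab⟩ := Finset.one_lt_card.mp hc
  rw [SimpleGraph.mem_neighborFinset] at ha hb
  have hpath2 : ∃ (x y : V) (p : T.Walk x y), p.IsPath ∧ p.length = 2 := by
    refine ⟨a, b, Walk.cons ha.symm (Walk.cons hb Walk.nil), ?_, rfl⟩
    simp [Walk.isPath_def, ha.ne', hb.ne, hab]
  set P : ℕ → Prop := fun n => ∃ (x y : V) (p : T.Walk x y), p.IsPath ∧ p.length = n with hP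
  have hP2 : P 2 := hpath2
  set N := Nat.findGreatest P (Fintype.card V) with hN
  have hN2 : 2 ≤ N := Nat.le_findGreatest (by omega) hP2
  have hPN : P N := Nat.findGreatest_spec (m := 2) (by omega) hP2
  have hmax : ∀ {x y : V} (p : T.Walk x y), p.IsPath → p.length ≤ N := by
    intro x y p hp
    exact Nat.le_findGreatest (le_of_lt hp.length_lt) ⟨x, y, p, hp, rfl⟩
  obtain ⟨u, y, p, hp, hlen⟩ := hPN
  match p, hp, hlen with
  | .nil, hp, hlen => simp at hlen; omega
  | .cons h1 .nil, hp, hlen => simp at hlen; omega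
  | @Walk.cons _ _ _ v _ h1 (@Walk.cons _ _ _ v2 _ h2 p2), hp, hlen =>
  have hp1 : (Walk.cons h2 p2).IsPath := hp.of_cons
  have hup1 : u ∉ (Walk.cons h2 p2).support := ((Walk.cons_isPath_iff h1 _).mp hp).2
  -- u is a leaf
  have hu_leaf : ∀ w, T.Adj u w → w = v := by
    intro w hw
    by_contra hne
    by_cases hmem : w ∈ (Walk.cons h1 (Walk.cons h2 p2)).support
    · exact no_chord hac h1 _ hp hmem hw hne
    · have hq : (Walk.cons hw.symm (Walk.cons h1 (Walk.cons h2 p2))).IsPath := hp.cons hmem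
      have := hmax _ hq
      simp only [Walk.length_cons] at this hlen
      omega
  have huv : u ≠ v := h1.ne
  have hvv2 : v ≠ v2 := h2.ne
  have hv2p1 : v2 ∈ (Walk.cons h2 p2).support := by simp
  have huv2 : u ≠ v2 := fun hh => hup1 (hh ▸ hv2p1)
  -- every neighbor of v other than u, v2 is a leaf whose only neighbor is v
  have hleaf : ∀ w, T.Adj v w → w ≠ u → w ≠ v2 → ∀ x, T.Adj w x → x = v := by
    intro w hw hwu hwv2 x hx
    by_contra hxv
    have hwp1 : w ∉ (Walk.cons h2 p2).support := fun hmem =>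
      no_chord hac h2 p2 hp1 hmem hw hwv2
    have hxp1 : x ∉ (Walk.cons h2 p2).support := by
      intro hmem
      have hr : (((Walk.cons h2 p2).takeUntil x hmem).reverse).IsPath :=
        (hp1.takeUntil hmem).reverse
      have hwr : w ∉ (((Walk.cons h2 p2).takeUntil x hmem).reverse).support := by
        rw [Walk.support_reverse, List.mem_reverse]
        exact fun hh => hwp1 (Walk.support_takeUntil_subset _ hmem hh)
      have hpath2' : (Walk.cons hx (((Walk.cons h2 p2).takeUntil x hmem).reverse)).IsPath :=
        hr.cons hwr
      have hpath1' : (Walk.cons hw.symm Walk.nil : T.Walk w v).IsPath := by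
        simp [Walk.isPath_def, hw.ne']
      have hequ := hac.path_unique ⟨_, hpath2'⟩ ⟨_, hpath1'⟩
      have hlen' := congrArg (fun q : T.Path w v => (q : T.Walk w v).length) hequ
      simp only [Walk.length_cons, Walk.length_nil, Walk.length_reverse] at hlen'
      have hx0 : ((Walk.cons h2 p2).takeUntil x hmem).length = 0 := by omega
      have : x = v := by
        have := Walk.eq_of_length_eq_zero (by
          rw [Walk.length_reverse]; exact hx0 :
          (((Walk.cons h2 p2).takeUntil x hmem).reverse).length = 0)
        exact this
      exact hxv this
    have hpath3 : (Walk.cons hw.symm (Walk.cons h2 p2)).IsPath := hp1.cons hwp1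
    have hxmem : x ∉ (Walk.cons hw.symm (Walk.cons h2 p2)).support := by
      simp only [Walk.support_cons, List.mem_cons]
      push_neg
      exact ⟨hx.ne', hxv, fun hh => hxp1 (by simp [hh])⟩
    have hpath4 : (Walk.cons hx.symm (Walk.cons hw.symm (Walk.cons h2 p2))).IsPath :=
      hpath3.cons hxmem
    have := hmax _ hpath4
    simp only [Walk.length_cons] at this hlen
    omega
  -- any nontrivial walk from u passes through v
  have hu_path : ∀ {t : V} (R : T.Walk u t), t ≠ u → v ∈ R.support := by
    intro t R hne
    cases R with
    | nil => exact absurd rfl hne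
    | cons h' S =>
      have := hu_leaf _ h'
      subst this
      simp
  -- structure: every vertex other than u, v is either a leaf neighbor of v,
  -- or connected to v2 avoiding u and v
  have hstruct : ∀ a2 : V, a2 ≠ u → a2 ≠ v →
      ((T.Adj v a2 ∧ ∀ z, T.Adj a2 z → z = v) ∨
       (∃ W : T.Walk v2 a2, ∀ z ∈ W.support, z ≠ u ∧ z ≠ v)) := by
    intro a2 ha2u ha2v
    obtain ⟨Q, hQ, -⟩ := hT.existsUnique_path v a2
    match Q, hQ with
    | .nil, hQ => exact absurd rfl ha2v
    | @Walk.cons _ _ _ w _ hvw Q', hQ =>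
      have hvQ' : v ∉ Q'.support := ((Walk.cons_isPath_iff hvw Q').mp hQ).2
      have hQ' : Q'.IsPath := hQ.of_cons
      have hwu : w ≠ u := by
        rintro rfl
        exact hvQ' (hu_path Q' ha2u)
      by_cases hwv2 : w = v2
      · subst hwv2
        right
        refine ⟨Q', fun z hz => ⟨?_, ?_⟩⟩
        · rintro rfl
          have humem : z ∈ Q'.support := hz
          have hvmem : v ∈ (Q'.takeUntil z humem).reverse.support :=
            hu_path _ (fun hh => hwu hh)
          rw [Walk.support_reverse, List.mem_reverse] at hvmem
          exact hvQ' (Walk.support_takeUntil_subset _ humem hvmem)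
        · rintro rfl; exact hvQ' hz
      · match Q', hQ', hvQ' with
        | .nil, hQ', hvQ' => exact Or.inl ⟨hvw, fun z hz => hleaf w hvw hwu hwv2 z hz⟩
        | .cons hwz Q'', hQ', hvQ' =>
          exfalso
          have := hleaf w hvw hwu hwv2 _ hwz
          subst this
          exact hvQ' (by simp)
  -- final assembly
  have hv2u' : v2 ≠ u := fun hh => huv2 hh.symm
  have hv2v' : (⟨v2, hv2u'⟩ : {w : V | w ≠ u}) ≠ ⟨v, h1.ne'⟩ := by
    intro hh; exact hvv2 (congrArg Subtype.val hh).symm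
  have hnbr : T.neighborSet u = {v} := by
    ext z
    simp only [SimpleGraph.mem_neighborSet, Set.mem_singleton_iff]
    exact ⟨hu_leaf z, fun hh => hh ▸ h1⟩
  have hncard : (T.neighborSet u).ncard = 1 := by rw [hnbr]; exact Set.ncard_singleton v
  have hsingly : SinglyPrePendant (T.induce {w : V | w ≠ u}) ⟨v, h1.ne'⟩ := by
    unfold SinglyPrePendant
    set G2 := ((T.induce {w : V | w ≠ u}).induce
      {w : {w : V | w ≠ u} | w ≠ (⟨v, h1.ne'⟩ : {w : V | w ≠ u})}) with hG2
    have claim : ∀ c : G2.ConnectedComponent, 1 < c.supp.ncard →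
        c = G2.connectedComponentMk ⟨⟨v2, hv2u'⟩, hv2v'⟩ := by
      intro c hc
      obtain ⟨a, ha, b, hb, hab⟩ := (Set.one_lt_ncard (Set.toFinite _)).mp hc
      rw [SimpleGraph.ConnectedComponent.mem_supp_iff] at ha hb
      obtain ⟨Wab⟩ := SimpleGraph.ConnectedComponent.exact (ha.trans hb.symm)
      cases Wab with
      | nil => exact absurd rfl hab
      | @cons _ m _ hax W' =>
        have ta : T.Adj a.1.1 m.1.1 := hax
        have hm3 : m.1.1 ≠ v := by
          intro hh; exact m.2 (Subtype.ext hh)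
        have ha1 : a.1.1 ≠ u := a.1.2
        have ha2 : a.1.1 ≠ v := by
          intro hh; exact a.2 (Subtype.ext hh)
        rcases hstruct a.1.1 ha1 ha2 with ⟨-, hall⟩ | ⟨W, hW⟩
        · exact absurd (hall m.1.1 ta) hm3
        · have reach2 := lift2 h1.ne' W hW hv2u' hv2v' ha1 a.2
          exact ha.symm.trans (SimpleGraph.ConnectedComponent.sound reach2).symm
    intro c hc d hd
    rw [claim c hc, claim d hd]
  exact ⟨u, v, h1, hncard, Or.inl hsingly⟩
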